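/- Let F be a field of characteristic ≠ 2 and R a simple associative unital F-algebra with an involution * of the first kind, with S ⊊ R, and assume S is not a commutative set (there exist a, b ∈ S with ab ≠ ba). Then SKS = R, where SKS is the additive subgroup of R generated by all products aub with a, b ∈ S and u ∈ K. -/

import Mathlib

/-- If `R` is simple and `S` is not a commutative set, then `SKS = R`. -/
theorem stmt_18 (F R : Type*) [Field F] [Ring R] [Algebra F R] [StarRing R]
    [IsSimpleRing R]
    (hchar : (2 : F) ≠ 0)
    (hfirst : Set.center R ⊆ {r : R | star r = r})
    (hproper : {r : R | star r = r} ≠ Set.univ)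
    (hnc : ∃ a ∈ {r : R | star r = r}, ∃ b ∈ {r : R | star r = r}, a * b ≠ b * a) :
    (AddSubgroup.closure {z : R | ∃ a ∈ {r : R | star r = r},
        ∃ u ∈ {r : R | star r = -r}, ∃ b ∈ {r : R | star r = r},
        z = a * u * b} : Set R) = Set.univ := by
  obtain ⟨a, ha, b, hb, hab⟩ := hnc
  simp only [Set.mem_setOf_eq] at ha hb
  set T : AddSubgroup R := AddSubgroup.closure {z : R | ∃ a ∈ {r : R | star r = r},
        ∃ u ∈ {r : R | star r = -r}, ∃ b ∈ {r : R | star r = r},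
        z = a * u * b} with hT
  have genT : ∀ p u q : R, star p = p → star u = -u → star q = q → p * u * q ∈ T :=
    fun p u q hp hu hq => AddSubgroup.subset_closure ⟨p, hp, u, hu, q, hq, rfl⟩
  have hstarAlg : ∀ c : F, star (algebraMap F R c) = algebraMap F R c := fun c =>
    hfirst (Semigroup.mem_center_iff.mpr fun g => (Algebra.commutes c g).symm)
  have hsmulstar : ∀ (c : F) (y : R), star (c • y) = c • star y := by
    intro c y
    rw [Algebra.smul_def, star_mul, hstarAlg, Algebra.smul_def]
    exact (Algebra.commutes c (star y)).symm
  have Tsmul : ∀ (c : F) (y : R), y ∈ T → c • y ∈ T := by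
    intro c y hy
    induction hy using AddSubgroup.closure_induction with
    | mem z hz =>
        obtain ⟨p, hp, u, hu, q, hq, rfl⟩ := hz
        have key : c • (p * u * q) = (c • p) * u * q := by
          rw [smul_mul_assoc, smul_mul_assoc]
        rw [key]
        exact genT _ _ _ (by rw [hsmulstar, hp]) hu hq
    | zero => simpa using zero_mem T
    | add p q _ _ hp hq => simpa [smul_add] using add_mem hp hq
    | neg p _ hp => simpa [smul_neg] using neg_mem hp
  have hdec : ∀ x : R, ∃ s k : R, star s = s ∧ star k = -k ∧ x = s + k := by
    intro x
    refine ⟨(2⁻¹ : F) • (x + star x), (2⁻¹ : F) • (x - star x), ?_, ?_, ?_⟩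
    · rw [hsmulstar, star_add, star_star, add_comm]
    · rw [hsmulstar, star_sub, star_star, ← smul_neg, neg_sub]
    · rw [← smul_add]
      have h2 : (x + star x) + (x - star x) = (2 : F) • x := by
        rw [two_smul]; abel
      rw [h2, smul_smul, inv_mul_cancel₀ hchar, one_smul]
  have g2 : ∀ s u : R, star s = s → star u = -u → s * u ∈ T := by
    intro s u hs hu
    simpa using genT s u 1 hs hu (star_one R)
  have g3 : ∀ u q : R, star u = -u → star q = q → u * q ∈ T := by
    intro u q hu hq
    simpa using genT 1 u q (star_one R) hu hq
  -- star computations for derived elements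
  have hsymc1 : ∀ s u : R, star s = s → star u = -u → star (s * u - u * s) = s * u - u * s := by
    intro s u hs hu
    rw [star_sub, star_mul, star_mul, hs, hu]; noncomm_ring
  have hsymc2 : ∀ s u : R, star s = s → star u = -u → star (u * s - s * u) = u * s - s * u := by
    intro s u hs hu
    rw [star_sub, star_mul, star_mul, hs, hu]; noncomm_ring
  have hsymKK : ∀ u v : R, star u = -u → star v = -v → star (v * u + u * v) = v * u + u * v := by
    intro u v hu hv
    rw [star_add, star_mul, star_mul, hu, hv]; noncomm_ring
  have hskewSK : ∀ s v : R, star s = s → star v = -v →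
      star (s * v + v * s) = -(s * v + v * s) := by
    intro s v hs hv
    rw [star_add, star_mul, star_mul, hs, hv]; noncomm_ring
  -- absorption lemmas for a "U" element u : u*K ⊆ T and K*u ⊆ T
  have A1 : ∀ u : R, star u = -u → (∀ v : R, star v = -v → u * v ∈ T) →
      ∀ x : R, u * x ∈ T := by
    intro u hu hU x
    obtain ⟨s, k, hs, hk, hx⟩ := hdec x
    rw [hx, mul_add]
    exact add_mem (g3 u s hu hs) (hU k hk)
  have A2 : ∀ u : R, star u = -u → (∀ v : R, star v = -v → v * u ∈ T) →
      ∀ x : R, x * u ∈ T := by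
    intro u hu hU x
    obtain ⟨s, k, hs, hk, hx⟩ := hdec x
    rw [hx, add_mul]
    exact add_mem (g2 s u hs hu) (hU k hk)
  have Lleft : ∀ u : R, star u = -u → (∀ v : R, star v = -v → u * v ∈ T) →
      ∀ v k : R, star v = -v → star k = -k → (u * v - v * u) * k ∈ T := by
    intro u hu hU v k hv hk
    have key : (u * v - v * u) * k = (2 : F) • (u * (v * k)) - (v * u + u * v) * k := by
      rw [two_smul]; noncomm_ring
    rw [key]
    exact sub_mem (Tsmul 2 _ (A1 u hu hU (v * k))) (g2 _ _ (hsymKK u v hu hv) hk)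
  have master : ∀ u : R, star u = -u → (∀ v : R, star v = -v → u * v ∈ T) →
      (∀ v : R, star v = -v → v * u ∈ T) → ∀ x y : R, x * u * y ∈ T := by
    intro u hu hU1 hU2 x y
    obtain ⟨s1, k1, hs1, hk1, hx⟩ := hdec x
    obtain ⟨s2, k2, hs2, hk2, hy⟩ := hdec y
    have c1 : s1 * u * s2 ∈ T := genT _ _ _ hs1 hu hs2
    have c2 : s1 * u * k2 ∈ T := by
      have key : s1 * u * k2 = (s1 * u - u * s1) * k2 + u * (s1 * k2) := by noncomm_ring
      rw [key]
      exact add_mem (g2 _ _ (hsymc1 s1 u hs1 hu) hk2) (A1 u hu hU1 _)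
    have c3 : k1 * u * s2 ∈ T := by
      have key : k1 * u * s2 = k1 * (u * s2 - s2 * u) + (k1 * s2) * u := by noncomm_ring
      rw [key]
      exact add_mem (g3 _ _ hk1 (hsymc2 s2 u hs2 hu)) (A2 u hu hU2 _)
    have c4 : k1 * u * k2 ∈ T := by
      have key : k1 * u * k2 = u * (k1 * k2) - (u * k1 - k1 * u) * k2 := by noncomm_ring
      rw [key]
      exact sub_mem (A1 u hu hU1 _) (Lleft u hu hU1 k1 k2 hk1 hk2)
    have key : x * u * y = s1 * u * s2 + s1 * u * k2 + (k1 * u * s2 + k1 * u * k2) := by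
      rw [hx, hy]; noncomm_ring
    rw [key]
    exact add_mem (add_mem c1 c2) (add_mem c3 c4)
  -- S·S·K and K·S·S
  have ssk : ∀ s t v : R, star s = s → star t = t → star v = -v → s * t * v ∈ T := by
    intro s t v hs ht hv
    have key : s * t * v = s * (t * v + v * t) - s * v * t := by noncomm_ring
    rw [key]
    exact sub_mem (g2 s _ hs (hskewSK t v ht hv)) (genT s v t hs hv ht)
  have kss : ∀ v s t : R, star v = -v → star s = s → star t = t → v * s * t ∈ T := by
    intro v s t hv hs ht
    have key : v * s * t = (s * v + v * s) * t - s * v * t := by noncomm_ring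
    rw [key]
    exact sub_mem (g3 _ t (hskewSK s v hs hv) ht) (genT s v t hs hv ht)
  -- the commutator w = ab - ba
  set w : R := a * b - b * a with hw
  have hw0 : w ≠ 0 := sub_ne_zero.mpr hab
  have hwskew : star w = -w := by
    rw [hw, star_sub, star_mul, star_mul, ha, hb]; noncomm_ring
  have hwK : ∀ v : R, star v = -v → w * v ∈ T := by
    intro v hv
    have key : w * v = a * b * v - b * a * v := by rw [hw]; noncomm_ring
    rw [key]
    exact sub_mem (ssk a b v ha hb hv) (ssk b a v hb ha hv)
  have hKw : ∀ v : R, star v = -v → v * w ∈ T := by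
    intro v hv
    have key : v * w = v * a * b - v * b * a := by rw [hw]; noncomm_ring
    rw [key]
    exact sub_mem (kss v a b hv ha hb) (kss v b a hv hb ha)
  have hwabs : ∀ x y : R, x * w * y ∈ T := master w hwskew hwK hKw
  -- the two-sided ideal generated by w
  have hCT : ∀ x ∈ AddSubgroup.closure {z : R | ∃ r r' : R, z = r * w * r'}, x ∈ T := by
    intro x hx
    induction hx using AddSubgroup.closure_induction with
    | mem z hz => obtain ⟨r, r', rfl⟩ := hz; exact hwabs r r'
    | zero => exact zero_mem T
    | add p q _ _ hp hq => exact add_mem hp hq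
    | neg p _ hp => exact neg_mem hp
  have hCl : ∀ (r x : R), x ∈ AddSubgroup.closure {z : R | ∃ r r' : R, z = r * w * r'} →
      r * x ∈ AddSubgroup.closure {z : R | ∃ r r' : R, z = r * w * r'} := by
    intro r x hx
    induction hx using AddSubgroup.closure_induction with
    | mem z hz =>
        obtain ⟨r1, r2, rfl⟩ := hz
        exact AddSubgroup.subset_closure ⟨r * r1, r2, by noncomm_ring⟩
    | zero => simpa using zero_mem _
    | add p q _ _ hp hq => simpa [mul_add] using add_mem hp hq
    | neg p _ hp => simpa [mul_neg] using neg_mem hp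
  have hCr : ∀ (r x : R), x ∈ AddSubgroup.closure {z : R | ∃ r r' : R, z = r * w * r'} →
      x * r ∈ AddSubgroup.closure {z : R | ∃ r r' : R, z = r * w * r'} := by
    intro r x hx
    induction hx using AddSubgroup.closure_induction with
    | mem z hz =>
        obtain ⟨r1, r2, rfl⟩ := hz
        exact AddSubgroup.subset_closure ⟨r1, r2 * r, by noncomm_ring⟩
    | zero => simpa using zero_mem _
    | add p q _ _ hp hq => simpa [add_mul] using add_mem hp hq
    | neg p _ hp => simpa [neg_mul] using neg_mem hp
  let J : TwoSidedIdeal R := TwoSidedIdeal.mk'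
    (AddSubgroup.closure {z : R | ∃ r r' : R, z = r * w * r'} : Set R)
    (zero_mem _) (fun hx hy => add_mem hx hy) (fun hx => neg_mem hx)
    (fun {x y} hy => hCl x y hy) (fun {x y} hx => hCr y x hx)
  have hwJ : w ∈ J := by
    rw [TwoSidedIdeal.mem_mk']
    exact AddSubgroup.subset_closure ⟨1, 1, by noncomm_ring⟩
  haveI : IsSimpleOrder (TwoSidedIdeal R) := IsSimpleRing.simple
  rcases eq_bot_or_eq_top J with hbot | htop
  · rw [hbot, TwoSidedIdeal.mem_bot] at hwJ
    exact absurd hwJ hw0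
  · rw [Set.eq_univ_iff_forall]
    intro x
    have hxJ : x ∈ J := by rw [htop]; exact TwoSidedIdeal.mem_top R
    rw [TwoSidedIdeal.mem_mk'] at hxJ
    exact hCT x hxJ
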